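/- Let F be a random variable, z > 0, and suppose E[F^{2k}] ≤ C. Let f_z be the Stein equation solution. Then E[(f_z'(F))²] ≤ C'/z^{2k} for a constant C' depending only on k and C. -/

import Mathlib

open MeasureTheory Real Set Filter

/-- The standard normal cumulative distribution function. -/
noncomputable def stdGaussCDF (z : ℝ) : ℝ :=
  ∫ t in Set.Iic z, Real.exp (-t ^ 2 / 2) / Real.sqrt (2 * Real.pi)

/-- The standard normal density. -/
noncomputable def stdGaussPDF (w : ℝ) : ℝ :=
  Real.exp (-w ^ 2 / 2) / Real.sqrt (2 * Real.pi)

/-- The solution of the Stein equation for the Kolmogorov test function `1_{· ≤ z}`. -/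
noncomputable def steinSol (z w : ℝ) : ℝ :=
  if w ≤ z then stdGaussCDF w * (1 - stdGaussCDF z) / stdGaussPDF w
  else stdGaussCDF z * (1 - stdGaussCDF w) / stdGaussPDF w

/-- The derivative of the Stein solution, defined via the Stein equation
`f_z'(w) = w f_z(w) + 1_{w ≤ z} - Φ(z)`. -/
noncomputable def steinSol' (z w : ℝ) : ℝ :=
  w * steinSol z w + (if w ≤ z then 1 else 0) - stdGaussCDF z

lemma sqrt2pi_pos : 0 < Real.sqrt (2 * Real.pi) :=
  Real.sqrt_pos.2 (by positivity)

lemma pdf_pos (w : ℝ) : 0 < stdGaussPDF w :=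
  div_pos (Real.exp_pos _) sqrt2pi_pos

lemma pdf_eq' : stdGaussPDF = fun w => Real.exp (-(2⁻¹) * w ^ 2) / Real.sqrt (2 * Real.pi) := by
  funext w
  rw [stdGaussPDF, show -w^2/2 = -(2⁻¹)*w^2 by ring]

lemma pdf_integrable : Integrable stdGaussPDF := by
  rw [pdf_eq']
  exact (integrable_exp_neg_mul_sq (by norm_num : (0:ℝ) < 2⁻¹)).div_const _

lemma pdf_total : ∫ w, stdGaussPDF w = 1 := by
  rw [pdf_eq']
  rw [integral_div, integral_gaussian]
  rw [show π / 2⁻¹ = 2 * π by ring]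
  exact div_self (ne_of_gt sqrt2pi_pos)

lemma cdf_eq (z : ℝ) : stdGaussCDF z = ∫ t in Set.Iic z, stdGaussPDF t := rfl

lemma cdf_add_tail (z : ℝ) : stdGaussCDF z + ∫ t in Set.Ioi z, stdGaussPDF t = 1 := by
  rw [cdf_eq, intervalIntegral.integral_Iic_add_Ioi pdf_integrable.integrableOn pdf_integrable.integrableOn,
    pdf_total]

lemma tail_eq (z : ℝ) : 1 - stdGaussCDF z = ∫ t in Set.Ioi z, stdGaussPDF t := by
  linarith [cdf_add_tail z]

lemma cdf_pos (z : ℝ) : 0 < stdGaussCDF z := by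
  rw [cdf_eq]
  refine (setIntegral_pos_iff_support_of_nonneg_ae ?_ pdf_integrable.integrableOn).2 ?_
  · exact Filter.Eventually.of_forall (fun t => (pdf_pos t).le)
  · have : Function.support stdGaussPDF = Set.univ := by
      ext t; simp [Function.mem_support, (pdf_pos t).ne']
    rw [this, Set.univ_inter]
    simp [Real.volume_Iic]

lemma tail_pos (z : ℝ) : 0 < 1 - stdGaussCDF z := by
  rw [tail_eq]
  refine (setIntegral_pos_iff_support_of_nonneg_ae ?_ pdf_integrable.integrableOn).2 ?_
  · exact Filter.Eventually.of_forall (fun t => (pdf_pos t).le)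
  · have : Function.support stdGaussPDF = Set.univ := by
      ext t; simp [Function.mem_support, (pdf_pos t).ne']
    rw [this, Set.univ_inter]
    simp [Real.volume_Ioi]

lemma cdf_le_one (z : ℝ) : stdGaussCDF z ≤ 1 := by linarith [tail_pos z]

lemma cdf_mono {w z : ℝ} (h : w ≤ z) : stdGaussCDF w ≤ stdGaussCDF z := by
  rw [cdf_eq, cdf_eq]
  exact setIntegral_mono_set pdf_integrable.integrableOn
    (Filter.Eventually.of_forall (fun t => (pdf_pos t).le))
    (HasSubset.Subset.eventuallyLE (Set.Iic_subset_Iic.2 h))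

lemma xpdf_integrable : Integrable (fun t : ℝ => t * stdGaussPDF t) := by
  rw [pdf_eq']
  have := (integrable_mul_exp_neg_mul_sq (by norm_num : (0:ℝ) < 2⁻¹)).div_const
    (Real.sqrt (2 * Real.pi))
  exact this.congr (Filter.Eventually.of_forall (fun t => by simp [mul_div_assoc]))

lemma pdf_hasDeriv (t : ℝ) :
    HasDerivAt (fun t : ℝ => -stdGaussPDF t) (t * stdGaussPDF t) t := by
  have h1 : HasDerivAt (fun t : ℝ => -(2⁻¹) * t ^ 2) (-t) t := by
    have := (hasDerivAt_pow 2 t).const_mul (-(2⁻¹ : ℝ))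
    refine this.congr_deriv ?_
    push_cast
    ring
  have h2 := (h1.exp).neg.div_const (Real.sqrt (2 * Real.pi))
  have he : (fun x : ℝ => -stdGaussPDF x)
      = fun x => -Real.exp (-(2⁻¹) * x ^ 2) / Real.sqrt (2 * Real.pi) := by
    funext x
    rw [stdGaussPDF, show -x ^ 2 / 2 = -(2⁻¹) * x ^ 2 by ring]
    ring
  rw [he]
  refine h2.congr_deriv ?_
  rw [stdGaussPDF, show -t ^ 2 / 2 = -(2⁻¹) * t ^ 2 by ring]
  ring

lemma sq_half_tendsto_top : Tendsto (fun t : ℝ => t ^ 2 / 2) atTop atTop := by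
  apply Filter.Tendsto.atTop_div_const (by norm_num : (0:ℝ) < 2)
  exact tendsto_pow_atTop two_ne_zero

lemma pdf_tendsto_top : Tendsto (fun t : ℝ => -stdGaussPDF t) atTop (nhds 0) := by
  have h3 : Tendsto (fun t : ℝ => -(Real.exp (-(t ^ 2 / 2)) / Real.sqrt (2 * Real.pi)))
      atTop (nhds 0) := by
    simpa using ((Real.tendsto_exp_neg_atTop_nhds_zero.comp sq_half_tendsto_top).div_const
      (Real.sqrt (2 * Real.pi))).neg
  exact h3.congr (fun t => by rw [stdGaussPDF, show -t ^ 2 / 2 = -(t ^ 2 / 2) by ring])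

lemma pdf_tendsto_bot : Tendsto (fun t : ℝ => -stdGaussPDF t) atBot (nhds 0) := by
  have hb : Tendsto (fun t : ℝ => t ^ 2 / 2) atBot atTop := by
    have := sq_half_tendsto_top.comp tendsto_neg_atBot_atTop
    exact this.congr (fun t => by simp [Function.comp, neg_pow])
  have h3 : Tendsto (fun t : ℝ => -(Real.exp (-(t ^ 2 / 2)) / Real.sqrt (2 * Real.pi)))
      atBot (nhds 0) := by
    simpa using ((Real.tendsto_exp_neg_atTop_nhds_zero.comp hb).div_const
      (Real.sqrt (2 * Real.pi))).neg
  exact h3.congr (fun t => by rw [stdGaussPDF, show -t ^ 2 / 2 = -(t ^ 2 / 2) by ring])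

lemma integral_xpdf_Ioi (w : ℝ) : ∫ t in Set.Ioi w, t * stdGaussPDF t = stdGaussPDF w := by
  have := integral_Ioi_of_hasDerivAt_of_tendsto' (f := fun t : ℝ => -stdGaussPDF t)
    (f' := fun t : ℝ => t * stdGaussPDF t) (a := w) (m := 0)
    (fun x _ => pdf_hasDeriv x) xpdf_integrable.integrableOn pdf_tendsto_top
  simpa using this

lemma integral_xpdf_Iic (w : ℝ) : ∫ t in Set.Iic w, t * stdGaussPDF t = -stdGaussPDF w := by
  have := integral_Iic_of_hasDerivAt_of_tendsto' (f := fun t : ℝ => -stdGaussPDF t)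
    (f' := fun t : ℝ => t * stdGaussPDF t) (a := w) (m := 0)
    (fun x _ => pdf_hasDeriv x) xpdf_integrable.integrableOn pdf_tendsto_bot
  simpa using this

lemma mills_pos {w : ℝ} (hw : 0 < w) : 1 - stdGaussCDF w ≤ stdGaussPDF w / w := by
  rw [tail_eq]
  have h1 : ∫ t in Set.Ioi w, stdGaussPDF t ≤ ∫ t in Set.Ioi w, w⁻¹ * (t * stdGaussPDF t) := by
    refine setIntegral_mono_on pdf_integrable.integrableOn
      (xpdf_integrable.const_mul _).integrableOn measurableSet_Ioi ?_
    intro t ht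
    have ht' : w ≤ t := le_of_lt ht
    have h2 : 1 ≤ w⁻¹ * t := by
      rw [inv_mul_eq_div, le_div_iff₀ hw]; linarith
    nlinarith [pdf_pos t]
  rw [MeasureTheory.integral_const_mul, integral_xpdf_Ioi] at h1
  rw [div_eq_inv_mul]
  exact h1

lemma mills_neg {w : ℝ} (hw : w < 0) : stdGaussCDF w ≤ stdGaussPDF w / (-w) := by
  rw [cdf_eq]
  have h1 : ∫ t in Set.Iic w, stdGaussPDF t ≤ ∫ t in Set.Iic w, w⁻¹ * (t * stdGaussPDF t) := by
    refine setIntegral_mono_on pdf_integrable.integrableOn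
      (xpdf_integrable.const_mul _).integrableOn measurableSet_Iic ?_
    intro t ht
    have ht' : t ≤ w := ht
    have h2 : 1 ≤ w⁻¹ * t := by
      rw [inv_mul_eq_div, le_div_iff_of_neg hw]; linarith
    nlinarith [pdf_pos t]
  rw [MeasureTheory.integral_const_mul, integral_xpdf_Iic] at h1
  calc ∫ t in Set.Iic w, stdGaussPDF t ≤ w⁻¹ * -stdGaussPDF w := h1
    _ = stdGaussPDF w / (-w) := by rw [inv_mul_eq_div, div_neg, neg_div]

noncomputable def Akonst (k : ℕ) : ℝ :=
  ((4/3) ^ k * k.factorial * π + 2 * (4/3) ^ (k-1) * (k-1).factorial) / (2 * π)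

lemma Akonst_pos (k : ℕ) : 0 < Akonst k := by
  have := pi_pos
  have h1 : (0:ℝ) < k.factorial := by exact_mod_cast k.factorial_pos
  have h2 : (0:ℝ) < (k-1).factorial := by exact_mod_cast (k-1).factorial_pos
  apply div_pos _ (by positivity)
  positivity

lemma exp_z_bound (m : ℕ) (z : ℝ) :
    Real.exp (-(3 * z ^ 2 / 4)) * z ^ (2 * m) ≤ (4/3) ^ m * m.factorial := by
  have h0 : (0:ℝ) ≤ 3 * z ^ 2 / 4 := by positivity
  have hfac : (0:ℝ) < m.factorial := by exact_mod_cast m.factorial_pos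
  have h2 : (3 * z ^ 2 / 4) ^ m ≤ (m.factorial : ℝ) * Real.exp (3 * z ^ 2 / 4) := by
    have h1 := Real.pow_div_factorial_le_exp (3 * z ^ 2 / 4) h0 m
    rw [div_le_iff₀ hfac] at h1
    linarith
  have hz : z ^ (2 * m) = (4/3:ℝ) ^ m * (3 * z ^ 2 / 4) ^ m := by
    rw [pow_mul, ← mul_pow]
    congr 1
    ring
  have hexp : Real.exp (-(3 * z ^ 2 / 4)) * Real.exp (3 * z ^ 2 / 4) = 1 := by
    rw [← Real.exp_add]; simp
  have e_pos := Real.exp_pos (-(3 * z ^ 2 / 4))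
  calc Real.exp (-(3 * z ^ 2 / 4)) * z ^ (2 * m)
      = Real.exp (-(3 * z ^ 2 / 4)) * ((4/3:ℝ) ^ m * (3 * z ^ 2 / 4) ^ m) := by rw [hz]
    _ ≤ Real.exp (-(3 * z ^ 2 / 4)) * ((4/3:ℝ) ^ m * ((m.factorial : ℝ)
          * Real.exp (3 * z ^ 2 / 4))) := by
        apply mul_le_mul_of_nonneg_left _ e_pos.le
        apply mul_le_mul_of_nonneg_left h2 (by positivity)
    _ = (4/3:ℝ) ^ m * (m.factorial : ℝ)
          * (Real.exp (-(3 * z ^ 2 / 4)) * Real.exp (3 * z ^ 2 / 4)) := by ring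
    _ = (4/3:ℝ) ^ m * m.factorial := by rw [hexp, mul_one]

lemma midbound {k : ℕ} (hk : 0 < k) {z : ℝ} (hz : 0 < z) :
    Real.exp (-(3 * z ^ 2 / 4)) * (π * z ^ 2 + 2) / (2 * π * z ^ 2)
      ≤ Akonst k / z ^ (2 * k) := by
  have hπ := pi_pos
  rw [div_le_div_iff₀ (by positivity) (pow_pos hz _)]
  have hsplit : z ^ (2 * k) = z ^ (2 * (k-1)) * z ^ 2 := by
    rw [← pow_add]; congr 1; omega
  have h1 := exp_z_bound k z
  rw [hsplit] at h1
  have h2 := exp_z_bound (k-1) z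
  have hA : Akonst k * (2 * π * z ^ 2)
      = (π * ((4/3:ℝ) ^ k * k.factorial) + 2 * ((4/3:ℝ) ^ (k-1) * (k-1).factorial)) * z ^ 2 := by
    rw [Akonst]; field_simp
  rw [hsplit, hA]
  calc Real.exp (-(3 * z ^ 2 / 4)) * (π * z ^ 2 + 2) * (z ^ (2 * (k-1)) * z ^ 2)
      = π * z ^ 2 * (Real.exp (-(3 * z ^ 2 / 4)) * (z ^ (2 * (k-1)) * z ^ 2))
        + 2 * (Real.exp (-(3 * z ^ 2 / 4)) * z ^ (2 * (k-1))) * z ^ 2 := by ring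
    _ ≤ π * z ^ 2 * ((4/3:ℝ) ^ k * k.factorial)
        + 2 * ((4/3:ℝ) ^ (k-1) * (k-1).factorial) * z ^ 2 := by
        gcongr
    _ = (π * ((4/3:ℝ) ^ k * k.factorial) + 2 * ((4/3:ℝ) ^ (k-1) * (k-1).factorial)) * z ^ 2 := by
        ring

lemma pdf_sq (z : ℝ) : stdGaussPDF z ^ 2 = Real.exp (-z ^ 2) / (2 * π) := by
  rw [stdGaussPDF, div_pow, Real.sq_sqrt (by positivity : (0:ℝ) ≤ 2 * π), sq, ← Real.exp_add]
  congr 1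
  ring

set_option maxHeartbeats 2000000 in
lemma key {k : ℕ} (hk : 0 < k) {z : ℝ} (hz : 0 < z) (w : ℝ) :
    steinSol' z w ^ 2 ≤ Akonst k / z ^ (2 * k) + (4 * 4 ^ k) * w ^ (2 * k) / z ^ (2 * k) := by
  have hπ := pi_pos
  have hφw := pdf_pos w
  have hφz := pdf_pos z
  have hΦw := cdf_pos w
  have hΦw1 := cdf_le_one w
  have hΦz := cdf_pos z
  have htz := tail_pos z
  have htw := tail_pos w
  have hzk := pow_pos hz (2 * k)
  by_cases hwhalf : z / 2 < w
  · -- w > z/2 : uniform bound 4, absorbed into moment term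
    have hw0 : 0 < w := lt_trans (by linarith) hwhalf
    have hs4 : steinSol' z w ^ 2 ≤ 4 := by
      by_cases hwz : w ≤ z
      · have hsid : steinSol' z w
            = (1 - stdGaussCDF z) * (w * stdGaussCDF w / stdGaussPDF w + 1) := by
          rw [steinSol', steinSol, if_pos hwz, if_pos hwz]
          field_simp
          ring
        have hm0 : 0 ≤ w * stdGaussCDF w / stdGaussPDF w := by positivity
        have hmz : (1 - stdGaussCDF w) * (w * stdGaussCDF w / stdGaussPDF w) ≤ 1 := by
          have h1 : 1 - stdGaussCDF w ≤ stdGaussPDF w / w := mills_pos hw0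
          have h2 : w * stdGaussCDF w / stdGaussPDF w ≤ w / stdGaussPDF w := by
            apply div_le_div_of_nonneg_right _ hφw.le
            nlinarith
          calc (1 - stdGaussCDF w) * (w * stdGaussCDF w / stdGaussPDF w)
              ≤ (stdGaussPDF w / w) * (w / stdGaussPDF w) := by
                apply mul_le_mul h1 h2 hm0 (by positivity)
            _ = 1 := by field_simp
        have hmono : 1 - stdGaussCDF z ≤ 1 - stdGaussCDF w := by
          linarith [cdf_mono hwz]
        have hs_le : steinSol' z w ≤ 2 := by
          rw [hsid]
          have : (1 - stdGaussCDF z) * (w * stdGaussCDF w / stdGaussPDF w)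
              ≤ (1 - stdGaussCDF w) * (w * stdGaussCDF w / stdGaussPDF w) :=
            mul_le_mul_of_nonneg_right hmono hm0
          nlinarith
        have hs_ge : 0 ≤ steinSol' z w := by
          rw [hsid]
          have : 0 ≤ w * stdGaussCDF w / stdGaussPDF w + 1 := by linarith
          positivity
        nlinarith
      · push_neg at hwz
        have hsid : steinSol' z w
            = stdGaussCDF z * (w * (1 - stdGaussCDF w) / stdGaussPDF w - 1) := by
          rw [steinSol', steinSol, if_neg (not_le.2 hwz), if_neg (not_le.2 hwz)]
          field_simp
          ring
        have hq0 : 0 ≤ w * (1 - stdGaussCDF w) / stdGaussPDF w := by positivity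
        have hq1 : w * (1 - stdGaussCDF w) / stdGaussPDF w ≤ 1 := by
          have h1 : 1 - stdGaussCDF w ≤ stdGaussPDF w / w := mills_pos hw0
          rw [div_le_one hφw]
          calc w * (1 - stdGaussCDF w) ≤ w * (stdGaussPDF w / w) :=
                mul_le_mul_of_nonneg_left h1 hw0.le
            _ = stdGaussPDF w := by field_simp
        have hs_le : steinSol' z w ≤ 0 := by
          rw [hsid]
          have h2 : w * (1 - stdGaussCDF w) / stdGaussPDF w - 1 ≤ 0 := by linarith
          exact mul_nonpos_of_nonneg_of_nonpos hΦz.le h2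
        have hs_ge : -1 ≤ steinSol' z w := by
          rw [hsid]
          nlinarith [cdf_le_one z]
        nlinarith
    have hpow : z ^ (2 * k) ≤ 4 ^ k * w ^ (2 * k) := by
      have : z ^ (2 * k) ≤ (2 * w) ^ (2 * k) :=
        pow_le_pow_left₀ hz.le (by linarith) _
      calc z ^ (2 * k) ≤ (2 * w) ^ (2 * k) := this
        _ = 4 ^ k * w ^ (2 * k) := by
            rw [mul_pow]
            congr 1
            rw [show (4:ℝ) = 2 ^ 2 by norm_num, ← pow_mul]
    have h4 : (4 : ℝ) ≤ 4 * 4 ^ k * w ^ (2 * k) / z ^ (2 * k) := by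
      rw [le_div_iff₀ hzk]
      nlinarith
    have hA : 0 ≤ Akonst k / z ^ (2 * k) := le_of_lt (div_pos (Akonst_pos k) hzk)
    calc steinSol' z w ^ 2 ≤ 4 := hs4
      _ ≤ 4 * 4 ^ k * w ^ (2 * k) / z ^ (2 * k) := h4
      _ ≤ Akonst k / z ^ (2 * k) + 4 * 4 ^ k * w ^ (2 * k) / z ^ (2 * k) := by linarith
  · -- w ≤ z/2 : Gaussian-tail bound, absorbed into Akonst term
    push_neg at hwhalf
    have hwz : w ≤ z := by linarith
    have hsid : steinSol' z w
        = (1 - stdGaussCDF z) * (w * stdGaussCDF w / stdGaussPDF w + 1) := by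
      rw [steinSol', steinSol, if_pos hwz, if_pos hwz]
      field_simp
      ring
    have hmills_z : 1 - stdGaussCDF z ≤ stdGaussPDF z / z := mills_pos hz
    have hkey : steinSol' z w ^ 2
        ≤ Real.exp (-(3 * z ^ 2 / 4)) * (π * z ^ 2 + 2) / (2 * π * z ^ 2) := by
      by_cases hw0 : w ≤ 0
      · -- m ∈ [-1, 0]
        have hm_le : w * stdGaussCDF w / stdGaussPDF w ≤ 0 := by
          apply div_nonpos_of_nonpos_of_nonneg _ hφw.le
          exact mul_nonpos_of_nonpos_of_nonneg hw0 hΦw.le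
        have hm_ge : -1 ≤ w * stdGaussCDF w / stdGaussPDF w := by
          rcases lt_or_eq_of_le hw0 with hlt | heq
          · have h1 := (le_div_iff₀ (neg_pos.2 hlt)).1 (mills_neg hlt)
            rw [le_div_iff₀ hφw]
            nlinarith
          · rw [heq]
            norm_num
        have hs_ge : 0 ≤ steinSol' z w := by
          rw [hsid]
          have : 0 ≤ w * stdGaussCDF w / stdGaussPDF w + 1 := by linarith
          positivity
        have hs_le : steinSol' z w ≤ stdGaussPDF z / z := by
          rw [hsid]
          calc (1 - stdGaussCDF z) * (w * stdGaussCDF w / stdGaussPDF w + 1)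
              ≤ (1 - stdGaussCDF z) * 1 := by
                apply mul_le_mul_of_nonneg_left _ htz.le
                linarith
            _ = 1 - stdGaussCDF z := mul_one _
            _ ≤ stdGaussPDF z / z := hmills_z
        have hsq : steinSol' z w ^ 2 ≤ Real.exp (-z ^ 2) / (2 * π * z ^ 2) := by
          have h1 : steinSol' z w ^ 2 ≤ (stdGaussPDF z / z) ^ 2 := by nlinarith
          calc steinSol' z w ^ 2 ≤ (stdGaussPDF z / z) ^ 2 := h1
            _ = Real.exp (-z ^ 2) / (2 * π * z ^ 2) := by
                rw [div_pow, pdf_sq]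
                rw [div_div]
        refine hsq.trans ?_
        have he : Real.exp (-z ^ 2) ≤ Real.exp (-(3 * z ^ 2 / 4)) * (π * z ^ 2 + 2) := by
          have h1 : Real.exp (-z ^ 2) ≤ Real.exp (-(3 * z ^ 2 / 4)) :=
            Real.exp_le_exp.2 (by linarith [sq_nonneg z])
          nlinarith [h1, Real.exp_pos (-(3 * z ^ 2 / 4)), mul_nonneg (mul_nonneg hπ.le (Real.exp_pos (-(3 * z ^ 2 / 4))).le) (sq_nonneg z)]
        exact div_le_div_of_nonneg_right he (by positivity)
      · -- 0 < w ≤ z/2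
        push_neg at hw0
        have hm_ge : 0 ≤ w * stdGaussCDF w / stdGaussPDF w := by positivity
        have hone : stdGaussPDF w * (Real.sqrt (2 * π) * Real.exp (w ^ 2 / 2)) = 1 := by
          rw [stdGaussPDF, div_mul_eq_mul_div, mul_comm (Real.sqrt (2 * π)) _, ← mul_assoc,
            ← Real.exp_add, show -w ^ 2 / 2 + w ^ 2 / 2 = 0 by ring, Real.exp_zero, one_mul,
            div_self sqrt2pi_pos.ne']
        have hw_inv : w / stdGaussPDF w = Real.sqrt (2 * π) * w * Real.exp (w ^ 2 / 2) := by
          rw [div_eq_mul_inv, inv_eq_of_mul_eq_one_right hone]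
          ring
        have hm_le : w * stdGaussCDF w / stdGaussPDF w
            ≤ Real.sqrt (2 * π) * w * Real.exp (w ^ 2 / 2) := by
          rw [← hw_inv]
          apply div_le_div_of_nonneg_right _ hφw.le
          nlinarith
        have hs_ge : 0 ≤ steinSol' z w := by
          rw [hsid]
          have : 0 ≤ w * stdGaussCDF w / stdGaussPDF w + 1 := by linarith
          positivity
        have hexp1 : (1:ℝ) ≤ Real.exp (w ^ 2 / 2) := by
          rw [show (1:ℝ) = Real.exp 0 by simp]
          exact Real.exp_le_exp.2 (by positivity)
        have hs_le : steinSol' z w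
            ≤ stdGaussPDF z / z * ((Real.sqrt (2 * π) * w + 1) * Real.exp (w ^ 2 / 2)) := by
          rw [hsid]
          have hstep : w * stdGaussCDF w / stdGaussPDF w + 1
              ≤ (Real.sqrt (2 * π) * w + 1) * Real.exp (w ^ 2 / 2) := by
            have hsw : 0 ≤ Real.sqrt (2 * π) * w := by positivity
            nlinarith
          calc (1 - stdGaussCDF z) * (w * stdGaussCDF w / stdGaussPDF w + 1)
              ≤ (stdGaussPDF z / z) * (w * stdGaussCDF w / stdGaussPDF w + 1) := by
                apply mul_le_mul_of_nonneg_right hmills_z (by linarith)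
            _ ≤ stdGaussPDF z / z * ((Real.sqrt (2 * π) * w + 1) * Real.exp (w ^ 2 / 2)) := by
                apply mul_le_mul_of_nonneg_left hstep (by positivity)
        have hsq : steinSol' z w ^ 2 ≤ (stdGaussPDF z / z) ^ 2
            * ((Real.sqrt (2 * π) * w + 1) ^ 2 * Real.exp (w ^ 2 / 2) ^ 2) := by
          have hrhs : 0 ≤ stdGaussPDF z / z * ((Real.sqrt (2 * π) * w + 1) * Real.exp (w ^ 2 / 2)) := by
            positivity
          nlinarith
        have hfac1 : (Real.sqrt (2 * π) * w + 1) ^ 2 ≤ π * z ^ 2 + 2 := by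
          have h2π : Real.sqrt (2 * π) ^ 2 = 2 * π := Real.sq_sqrt (by positivity)
          nlinarith [h2π, sq_nonneg (Real.sqrt (2 * π) * w - 1),
            mul_nonneg (mul_nonneg hπ.le (by linarith : (0:ℝ) ≤ z - 2 * w))
              (by linarith : (0:ℝ) ≤ z + 2 * w)]
        have hfac2 : Real.exp (w ^ 2 / 2) ^ 2 ≤ Real.exp (z ^ 2 / 4) := by
          rw [sq, ← Real.exp_add]
          apply Real.exp_le_exp.2
          nlinarith
        have hφ2 : (stdGaussPDF z / z) ^ 2 = Real.exp (-z ^ 2) / (2 * π * z ^ 2) := by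
          rw [div_pow, pdf_sq, div_div]
        have hcomb : Real.exp (-z ^ 2) * Real.exp (z ^ 2 / 4) = Real.exp (-(3 * z ^ 2 / 4)) := by
          rw [← Real.exp_add]
          congr 1
          ring
        calc steinSol' z w ^ 2
            ≤ (stdGaussPDF z / z) ^ 2 * ((Real.sqrt (2 * π) * w + 1) ^ 2
              * Real.exp (w ^ 2 / 2) ^ 2) := hsq
          _ ≤ (stdGaussPDF z / z) ^ 2 * ((π * z ^ 2 + 2) * Real.exp (z ^ 2 / 4)) := by
              apply mul_le_mul_of_nonneg_left _ (sq_nonneg _)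
              apply mul_le_mul hfac1 hfac2 (by positivity) (by positivity)
          _ = Real.exp (-z ^ 2) * Real.exp (z ^ 2 / 4) * (π * z ^ 2 + 2) / (2 * π * z ^ 2) := by
              rw [hφ2]; ring
          _ = Real.exp (-(3 * z ^ 2 / 4)) * (π * z ^ 2 + 2) / (2 * π * z ^ 2) := by
              rw [hcomb]
    have hmom0 : 0 ≤ 4 * 4 ^ k * w ^ (2 * k) / z ^ (2 * k) := by
      have : (0:ℝ) ≤ w ^ (2 * k) := by
        rw [pow_mul]; positivity
      positivity
    calc steinSol' z w ^ 2
        ≤ Real.exp (-(3 * z ^ 2 / 4)) * (π * z ^ 2 + 2) / (2 * π * z ^ 2) := hkey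
      _ ≤ Akonst k / z ^ (2 * k) := midbound hk hz
      _ ≤ Akonst k / z ^ (2 * k) + 4 * 4 ^ k * w ^ (2 * k) / z ^ (2 * k) := by linarith

theorem stmt_11 {Ω : Type*} [MeasureSpace Ω] [IsProbabilityMeasure (volume : Measure Ω)]
    (F : Ω → ℝ) (hF : Measurable F) (k : ℕ) (hk : 0 < k) (C : ℝ) (hC : 0 < C)
    (hmom : ∫ ω, F ω ^ (2 * k) ≤ C) (hint : Integrable fun ω => F ω ^ (2 * k)) :
    ∃ C' > (0 : ℝ), ∀ z : ℝ, 0 < z →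
      ∫ ω, (steinSol' z (F ω)) ^ 2 ≤ C' / z ^ (2 * k) := by
  have hA := Akonst_pos k
  refine ⟨Akonst k + (4 * 4 ^ k) * C, by positivity, ?_⟩
  intro z hz
  have hzk : (0:ℝ) < z ^ (2 * k) := pow_pos hz _
  have hgint : Integrable (fun ω => Akonst k / z ^ (2 * k)
      + 4 * 4 ^ k * F ω ^ (2 * k) / z ^ (2 * k)) := by
    apply Integrable.add (integrable_const _)
    have := hint.const_mul (4 * 4 ^ k / z ^ (2 * k))
    exact this.congr (Filter.Eventually.of_forall (fun ω => by ring))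
  have h1 : ∫ ω, steinSol' z (F ω) ^ 2
      ≤ ∫ ω, (Akonst k / z ^ (2 * k) + 4 * 4 ^ k * F ω ^ (2 * k) / z ^ (2 * k)) := by
    apply integral_mono_of_nonneg (Filter.Eventually.of_forall (fun ω => sq_nonneg _)) hgint
    exact Filter.Eventually.of_forall (fun ω => key hk hz (F ω))
  have h2 : ∫ ω, (Akonst k / z ^ (2 * k) + 4 * 4 ^ k * F ω ^ (2 * k) / z ^ (2 * k))
      = Akonst k / z ^ (2 * k) + (4 * 4 ^ k / z ^ (2 * k)) * ∫ ω, F ω ^ (2 * k) := by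
    have hc : Integrable (fun ω => 4 * 4 ^ k * F ω ^ (2 * k) / z ^ (2 * k)) := by
      have := hint.const_mul (4 * 4 ^ k / z ^ (2 * k))
      exact this.congr (Filter.Eventually.of_forall (fun ω => by ring))
    rw [integral_add (integrable_const _) hc, integral_const, probReal_univ]
    simp only [ENNReal.toReal_one, one_smul, smul_eq_mul, one_mul]
    have heq : (∫ ω, 4 * 4 ^ k * F ω ^ (2 * k) / z ^ (2 * k))
        = (4 * 4 ^ k / z ^ (2 * k)) * ∫ ω, F ω ^ (2 * k) := by
      rw [← MeasureTheory.integral_const_mul]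
      apply integral_congr_ae
      exact Filter.Eventually.of_forall (fun ω => by ring)
    rw [heq]
  have h3 : (4 * 4 ^ k / z ^ (2 * k)) * ∫ ω, F ω ^ (2 * k)
      ≤ (4 * 4 ^ k / z ^ (2 * k)) * C :=
    mul_le_mul_of_nonneg_left hmom (by positivity)
  have h4 : Akonst k / z ^ (2 * k) + (4 * 4 ^ k / z ^ (2 * k)) * C
      = (Akonst k + (4 * 4 ^ k) * C) / z ^ (2 * k) := by
    field_simp
  calc ∫ ω, steinSol' z (F ω) ^ 2
      ≤ ∫ ω, (Akonst k / z ^ (2 * k) + 4 * 4 ^ k * F ω ^ (2 * k) / z ^ (2 * k)) := h1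
    _ = Akonst k / z ^ (2 * k) + (4 * 4 ^ k / z ^ (2 * k)) * ∫ ω, F ω ^ (2 * k) := h2
    _ ≤ Akonst k / z ^ (2 * k) + (4 * 4 ^ k / z ^ (2 * k)) * C := by linarith
    _ = (Akonst k + (4 * 4 ^ k) * C) / z ^ (2 * k) := h4
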